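/- Let μ be a probability measure on ℝ with finite second moment. Define F(t,y) = ∫_ℝ exp(uy − u²t/2) μ(du), G(t,y) = (∫_ℝ u exp(uy − u²t/2) μ(du))/F(t,y), and H(t,y) = (∫_ℝ u² exp(uy − u²t/2) μ(du))/F(t,y) − G(t,y)². Then on the strip (0,∞) × ℝ the function H satisfies the equation ∂_t H + (1/2) ∂²_{yy} H + G · ∂_y H + H² = 0. -/

import Mathlib

open MeasureTheory ProbabilityTheory Real Filter Set
open scoped ENNReal NNReal

noncomputable section

/-- The Gaussian likelihood kernel `exp(u y - u^2 t / 2)`. -/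
def gker (t y u : ℝ) : ℝ := Real.exp (u * y - u ^ 2 * t / 2)

/-- The Widder transform `F(t,y) = ∫ exp(u y - u² t/2) μ(du)` of the measure `μ`. -/
def Fw (μ : Measure ℝ) (t y : ℝ) : ℝ := ∫ u, gker t y u ∂μ

/-- The posterior-mean function `G(t,y)`. -/
def Gp (μ : Measure ℝ) (t y : ℝ) : ℝ := (∫ u, u * gker t y u ∂μ) / Fw μ t y

/-- The posterior-variance function `H(t,y)`. -/
def Hp (μ : Measure ℝ) (t y : ℝ) : ℝ :=
  (∫ u, u ^ 2 * gker t y u ∂μ) / Fw μ t y - (Gp μ t y) ^ 2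

/-- The (topological) support of a measure on `ℝ`. -/
def msupport (μ : Measure ℝ) : Set ℝ := {x | ∀ U ∈ nhds x, μ U ≠ 0}

/-- `I_μ`: the interior of the smallest closed interval containing the support of `μ`,
i.e. the open interval `(inf (supp μ), sup (supp μ))`. -/
def Imu (μ : Measure ℝ) : Set ℝ := interior (convexHull ℝ (msupport μ))

/-- The dispersion function in estimate coordinates: `Ψ(t,x) = H(t, G(t,·)⁻¹(x))`. -/
def Psi (μ : Measure ℝ) (t x : ℝ) : ℝ := Hp μ t (Function.invFun (Gp μ t) x)

/-- The natural sigma-algebra generated by the observation process `Y` up to time `t`. -/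
def natSigma {Ω : Type*} [MeasurableSpace Ω] (Y : ℝ → Ω → ℝ) (t : ℝ) : MeasurableSpace Ω :=
  ⨆ s ∈ Set.Icc (0 : ℝ) t, MeasurableSpace.comap (Y s) inferInstance

/-- The right-continuous augmentation `F^Y(t) = ⋂_{s > t} σ(Y_r, r ≤ s)`
of the filtration generated by `Y`. -/
def obsFiltration {Ω : Type*} [MeasurableSpace Ω] (Y : ℝ → Ω → ℝ) (t : ℝ) :
    MeasurableSpace Ω :=
  ⨅ s ∈ Set.Ioi t, natSigma Y s

/-- A process `W` is a standard Brownian motion under the probability measure `P`: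
it starts at `0`, has continuous paths, Gaussian increments `W t - W s ~ N(0, t - s)`,
and independent increments. -/
structure IsStdBM {Ω : Type*} [MeasurableSpace Ω] (P : Measure Ω) (W : ℝ → Ω → ℝ) : Prop where
  measurable : ∀ t : ℝ, Measurable (W t)
  init : ∀ ω, W 0 ω = 0
  cont : ∀ ω, Continuous fun t => W t ω
  incrLaw : ∀ ⦃s t : ℝ⦄, 0 ≤ s → s ≤ t →
    Measure.map (fun ω => W t ω - W s ω) P = gaussianReal 0 (Real.toNNReal (t - s))
  indepIncr : ∀ (n : ℕ) (ts : Fin (n + 1) → ℝ), Monotone ts → 0 ≤ ts 0 →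
    iIndepFun (fun (i : Fin n) ω => W (ts i.succ) ω - W (ts i.castSucc) ω) P

/-- A stopping time of the observation filtration `F^Y`:
`{τ ≤ t} ∈ F^Y(t)` for every `t`. -/
def IsObsStoppingTime {Ω : Type*} [MeasurableSpace Ω] (Y : ℝ → Ω → ℝ) (τ : Ω → ℝ) : Prop :=
  ∀ t : ℝ, MeasurableSet[obsFiltration Y t] {ω | τ ω ≤ t}


lemma gker_abs_le (k : ℕ) {a c t y u : ℝ} (ha : 0 < a) (hc : |y| ≤ c) (hat : a ≤ t) :
    |u ^ k * gker t y u| ≤ (k.factorial : ℝ) * Real.exp ((c + 1) ^ 2 / (2 * a)) := by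
  have hc0 : 0 ≤ c := le_trans (abs_nonneg _) hc
  have h1 : |u ^ k * gker t y u| = |u| ^ k * Real.exp (u * y - u ^ 2 * t / 2) := by
    rw [abs_mul, abs_pow, gker, abs_of_pos (Real.exp_pos _)]
  rw [h1]
  have h2 : u * y - u ^ 2 * t / 2 ≤ |u| * c - u ^ 2 * a / 2 := by
    have h2a : u * y ≤ |u| * c := by
      calc u * y ≤ |u * y| := le_abs_self _
      _ = |u| * |y| := abs_mul _ _
      _ ≤ |u| * c := mul_le_mul_of_nonneg_left hc (abs_nonneg _)
    nlinarith [sq_nonneg u]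
  have h3 : |u| ^ k ≤ (k.factorial : ℝ) * Real.exp |u| := by
    have := Real.pow_div_factorial_le_exp _ (abs_nonneg u) k
    rw [div_le_iff₀ (by positivity)] at this
    linarith [this]
  have h4 : |u| + (|u| * c - u ^ 2 * a / 2) ≤ (c + 1) ^ 2 / (2 * a) := by
    rw [le_div_iff₀ (by positivity), ← sq_abs u]
    nlinarith [sq_nonneg (a * |u| - (c + 1))]
  calc |u| ^ k * Real.exp (u * y - u ^ 2 * t / 2)
      ≤ ((k.factorial : ℝ) * Real.exp |u|) * Real.exp (|u| * c - u ^ 2 * a / 2) := by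
        apply mul_le_mul h3 (Real.exp_le_exp.2 h2) (Real.exp_pos _).le (by positivity)
    _ = (k.factorial : ℝ) * Real.exp (|u| + (|u| * c - u ^ 2 * a / 2)) := by
        rw [mul_assoc, ← Real.exp_add]
    _ ≤ (k.factorial : ℝ) * Real.exp ((c + 1) ^ 2 / (2 * a)) := by
        exact mul_le_mul_of_nonneg_left (Real.exp_le_exp.2 h4) (by positivity)

def Mk (μ : Measure ℝ) (k : ℕ) (t y : ℝ) : ℝ := ∫ u, u ^ k * gker t y u ∂μ

lemma cont_gker (k : ℕ) (t y : ℝ) : Continuous fun u : ℝ => u ^ k * gker t y u := by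
  unfold gker; fun_prop

lemma integrable_gker (μ : Measure ℝ) [IsFiniteMeasure μ] (k : ℕ) {t : ℝ} (ht : 0 < t) (y : ℝ) :
    Integrable (fun u => u ^ k * gker t y u) μ := by
  refine Integrable.mono' (integrable_const ((k.factorial : ℝ) *
      Real.exp ((|y| + 1) ^ 2 / (2 * t)))) (cont_gker k t y).aestronglyMeasurable
    (ae_of_all _ fun u => ?_)
  rw [Real.norm_eq_abs]
  exact gker_abs_le k ht (by linarith [abs_nonneg y]) le_rfl

lemma hasDerivAt_gker_y (k : ℕ) (t u z : ℝ) :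
    HasDerivAt (fun z => u ^ k * gker t z u) (u ^ (k + 1) * gker t z u) z := by
  have h : HasDerivAt (fun z : ℝ => u * z - u ^ 2 * t / 2) u z := by
    simpa using ((hasDerivAt_id z).const_mul u).sub_const (u ^ 2 * t / 2)
  have := (h.exp.const_mul (u ^ k))
  exact this.congr_deriv (by unfold gker; ring)

lemma hasDerivAt_gker_t (k : ℕ) (y u s : ℝ) :
    HasDerivAt (fun s => u ^ k * gker s y u) (-(1 / 2) * (u ^ (k + 2) * gker s y u)) s := by
  have h : HasDerivAt (fun s : ℝ => u * y - u ^ 2 * s / 2) (-(u ^ 2 / 2)) s := by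
    simpa using (((hasDerivAt_id s).const_mul (u ^ 2)).div_const 2).const_sub (u * y)
  have := (h.exp.const_mul (u ^ k))
  exact this.congr_deriv (by unfold gker; ring)

lemma hasDerivAt_Mk_y (μ : Measure ℝ) [IsFiniteMeasure μ] (k : ℕ) {t : ℝ} (ht : 0 < t)
    (y : ℝ) : HasDerivAt (fun z => Mk μ k t z) (Mk μ (k + 1) t y) y := by
  have H := hasDerivAt_integral_of_dominated_loc_of_deriv_le (μ := μ)
    (F := fun z u => u ^ k * gker t z u) (F' := fun z u => u ^ (k + 1) * gker t z u)
    (x₀ := y) (s := Metric.ball y 1)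
    (bound := fun _ => ((k + 1).factorial : ℝ) * Real.exp ((|y| + 1 + 1) ^ 2 / (2 * t)))
    (Metric.ball_mem_nhds y one_pos)
    (.of_forall fun z => (cont_gker k t z).aestronglyMeasurable)
    (integrable_gker μ k ht y)
    (cont_gker (k + 1) t y).aestronglyMeasurable
    (ae_of_all _ fun u z hz => by
      rw [Real.norm_eq_abs]
      refine gker_abs_le (k + 1) ht ?_ le_rfl
      have := mem_ball_iff_norm.1 hz
      rw [Real.norm_eq_abs] at this
      calc |z| = |y + (z - y)| := by ring_nf
        _ ≤ |y| + |z - y| := abs_add_le _ _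
        _ ≤ |y| + 1 := by linarith)
    (integrable_const _)
    (ae_of_all _ fun u z _ => hasDerivAt_gker_y k t u z)
  exact H.2

lemma hasDerivAt_Mk_t (μ : Measure ℝ) [IsFiniteMeasure μ] (k : ℕ) {t : ℝ} (ht : 0 < t)
    (y : ℝ) : HasDerivAt (fun s => Mk μ k s y) (-(1 / 2) * Mk μ (k + 2) t y) t := by
  have ht2 : (0:ℝ) < t / 2 := by linarith
  have H := hasDerivAt_integral_of_dominated_loc_of_deriv_le (μ := μ)
    (F := fun s u => u ^ k * gker s y u)
    (F' := fun s u => -(1 / 2) * (u ^ (k + 2) * gker s y u))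
    (x₀ := t) (s := Metric.ball t (t / 2))
    (bound := fun _ => (1 / 2) * (((k + 2).factorial : ℝ) *
      Real.exp ((|y| + 1) ^ 2 / (2 * (t / 2)))))
    (Metric.ball_mem_nhds t ht2)
    (.of_forall fun s => (cont_gker k s y).aestronglyMeasurable)
    (integrable_gker μ k ht y)
    ((continuous_const.mul (cont_gker (k + 2) t y)).aestronglyMeasurable)
    (ae_of_all _ fun u s hs => by
      have hst : t / 2 ≤ s := by
        have := mem_ball_iff_norm.1 hs
        rw [Real.norm_eq_abs, abs_sub_lt_iff] at this
        linarith [this.2]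
      rw [norm_mul, Real.norm_eq_abs, Real.norm_eq_abs]
      have h12 : |(-((1:ℝ) / 2))| = 1 / 2 := by norm_num
      rw [h12]
      exact mul_le_mul_of_nonneg_left
        (gker_abs_le (k + 2) ht2 le_rfl hst) (by norm_num))
    (integrable_const _)
    (ae_of_all _ fun u s _ => hasDerivAt_gker_t k y u s)
  have h2 := H.2
  rwa [MeasureTheory.integral_const_mul] at h2


lemma Mk_zero_pos (μ : Measure ℝ) [IsProbabilityMeasure μ] {t : ℝ} (ht : 0 < t) (y : ℝ) :
    0 < Mk μ 0 t y := by
  rw [Mk]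
  rw [MeasureTheory.integral_pos_iff_support_of_nonneg
    (fun u => by rw [Pi.zero_apply, pow_zero, one_mul]; exact (Real.exp_pos _).le)
    (integrable_gker μ 0 ht y)]
  have : (Function.support fun u : ℝ => u ^ 0 * gker t y u) = Set.univ := by
    ext u
    simp [Function.support, gker, (Real.exp_pos _).ne']
  rw [this]
  simp

lemma Fw_eq_Mk (μ : Measure ℝ) (t y : ℝ) : Fw μ t y = Mk μ 0 t y := by
  simp [Fw, Mk]

lemma Hp_eq (μ : Measure ℝ) (s z : ℝ) :
    Hp μ s z = Mk μ 2 s z / Mk μ 0 s z - (Mk μ 1 s z / Mk μ 0 s z) ^ 2 := by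
  simp [Hp, Gp, Fw_eq_Mk, Mk]

/-- on `(0,∞) × ℝ` the posterior variance `H` satisfies
`∂_t H + (1/2) ∂²_{yy} H + G ∂_y H + H² = 0`. -/
theorem posterior_variance_pde
    (μ : Measure ℝ) [IsProbabilityMeasure μ] (hμ2 : Integrable (fun u => u ^ 2) μ)
    (t : ℝ) (ht : 0 < t) (y : ℝ) :
    deriv (fun s => Hp μ s y) t + (1 / 2) * iteratedDeriv 2 (fun z => Hp μ t z) y +
      Gp μ t y * deriv (fun z => Hp μ t z) y + (Hp μ t y) ^ 2 = 0 := by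
  have hne : ∀ z : ℝ, Mk μ 0 t z ≠ 0 := fun z => (Mk_zero_pos μ ht z).ne'
  have h : ∀ (k : ℕ) (z : ℝ), HasDerivAt (fun w => Mk μ k t w) (Mk μ (k + 1) t z) z :=
    fun k z => hasDerivAt_Mk_y μ k ht z
  -- first y-derivative of Hp at every z
  have hDy : ∀ z : ℝ, HasDerivAt (fun w => Hp μ t w)
      ((Mk μ 3 t z * Mk μ 0 t z - Mk μ 2 t z * Mk μ 1 t z) / Mk μ 0 t z ^ 2 -
        2 * (Mk μ 1 t z / Mk μ 0 t z) *
          ((Mk μ 2 t z * Mk μ 0 t z - Mk μ 1 t z * Mk μ 1 t z) / Mk μ 0 t z ^ 2)) z := by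
    intro z
    have A := (h 2 z).div (h 0 z) (hne z)
    have B := ((h 1 z).div (h 0 z) (hne z)).pow 2
    have C := A.sub B
    have hfun : (fun w => Hp μ t w) =
        fun w => Mk μ 2 t w / Mk μ 0 t w - (Mk μ 1 t w / Mk μ 0 t w) ^ 2 :=
      funext fun w => Hp_eq μ t w
    rw [hfun]
    refine C.congr_deriv ?_
    simp only [Pi.pow_apply, Pi.mul_apply, Pi.sub_apply, Pi.div_apply]
    push_cast
    ring
  have hd1 : deriv (fun z => Hp μ t z) =
      fun z => (Mk μ 3 t z * Mk μ 0 t z - Mk μ 2 t z * Mk μ 1 t z) / Mk μ 0 t z ^ 2 -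
        2 * (Mk μ 1 t z / Mk μ 0 t z) *
          ((Mk μ 2 t z * Mk μ 0 t z - Mk μ 1 t z * Mk μ 1 t z) / Mk μ 0 t z ^ 2) :=
    funext fun z => (hDy z).deriv
  -- second y-derivative at y
  have hpne : (Mk μ 0 t y) ^ 2 ≠ 0 := pow_ne_zero _ (hne y)
  have hden := (h 0 y).pow 2
  have A2 := (((h 3 y).mul (h 0 y)).sub ((h 2 y).mul (h 1 y))).div hden hpne
  have B2 := (((h 1 y).div (h 0 y) (hne y)).const_mul 2).mul
    ((((h 2 y).mul (h 0 y)).sub ((h 1 y).mul (h 1 y))).div hden hpne)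
  have C2 := A2.sub B2
  -- t-derivative at t
  have hts : ∀ k : ℕ, HasDerivAt (fun s => Mk μ k s y) (-(1 / 2) * Mk μ (k + 2) t y) t :=
    fun k => hasDerivAt_Mk_t μ k ht y
  have hT := ((hts 2).div (hts 0) (hne y)).sub (((hts 1).div (hts 0) (hne y)).pow 2)
  have hfunT : (fun s => Hp μ s y) =
      fun s => Mk μ 2 s y / Mk μ 0 s y - (Mk μ 1 s y / Mk μ 0 s y) ^ 2 :=
    funext fun s => Hp_eq μ s y
  have hT' : HasDerivAt (fun s => Mk μ 2 s y / Mk μ 0 s y - (Mk μ 1 s y / Mk μ 0 s y) ^ 2) _ t := hT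
  have C2' : HasDerivAt (fun z => (Mk μ 3 t z * Mk μ 0 t z - Mk μ 2 t z * Mk μ 1 t z) / Mk μ 0 t z ^ 2 -
      2 * (Mk μ 1 t z / Mk μ 0 t z) *
        ((Mk μ 2 t z * Mk μ 0 t z - Mk μ 1 t z * Mk μ 1 t z) / Mk μ 0 t z ^ 2)) _ y := C2
  rw [hfunT, hT'.deriv, iteratedDeriv_succ, iteratedDeriv_one, hd1, C2'.deriv]
  have hG : Gp μ t y = Mk μ 1 t y / Mk μ 0 t y := by simp [Gp, Fw_eq_Mk, Mk]
  rw [hG, Hp_eq]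
  have h0 := hne y
  simp only [Nat.reduceAdd, pow_one, Pi.pow_apply, Pi.mul_apply, Pi.sub_apply, Pi.div_apply]
  push_cast
  field_simp
  ring
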